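/- Let M and C be formal power series with zero constant term satisfying C ∘ (X·(T∘M)) = M, where T(X) = (λX+1)(X+1) and λ ∈ (0,1]. Then C = U((X / (X·(T∘M))^{<-1>}) - 1), where U = (T-1)^{<-1>}. -/

import Mathlib

/-- Composition `f ∘ g` of formal power series (intended for `g` with zero
constant term, in which case this is the usual composition). -/
noncomputable def pscomp (f g : PowerSeries ℂ) : PowerSeries ℂ :=
  PowerSeries.mk fun n =>
    ∑ k ∈ Finset.range (n + 1), PowerSeries.coeff k f * PowerSeries.coeff n (g ^ k)

open PowerSeries Finset

lemma coeff_pscomp (f g : PowerSeries ℂ) (n : ℕ) :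
    coeff n (pscomp f g) =
      ∑ k ∈ range (n + 1), coeff k f * coeff n (g ^ k) := by
  simp [pscomp]

lemma coeff_pow_eq_zero {g : PowerSeries ℂ} (hg : constantCoeff g = 0)
    {n k : ℕ} (h : n < k) : coeff n (g ^ k) = 0 := by
  obtain ⟨h', rfl⟩ := X_dvd_iff.mpr hg
  rw [mul_pow, coeff_X_pow_mul', if_neg (by omega)]

lemma pscomp_congr {F F' g : PowerSeries ℂ} {n : ℕ}
    (h : ∀ k ≤ n, coeff k F = coeff k F') :
    coeff n (pscomp F g) = coeff n (pscomp F' g) := by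
  rw [coeff_pscomp, coeff_pscomp]
  exact Finset.sum_congr rfl fun k hk => by
    rw [h k (by simpa [Nat.lt_succ_iff] using hk)]

lemma pscomp_add (f₁ f₂ g : PowerSeries ℂ) :
    pscomp (f₁ + f₂) g = pscomp f₁ g + pscomp f₂ g := by
  ext n
  simp [coeff_pscomp, add_mul, Finset.sum_add_distrib]

lemma pscomp_sub (f₁ f₂ g : PowerSeries ℂ) :
    pscomp (f₁ - f₂) g = pscomp f₁ g - pscomp f₂ g := by
  ext n
  simp [coeff_pscomp, sub_mul, Finset.sum_sub_distrib]

lemma pscomp_smul (c : ℂ) (f g : PowerSeries ℂ) :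
    pscomp (c • f) g = c • pscomp f g := by
  ext n
  simp [coeff_pscomp, Finset.mul_sum, mul_assoc]

lemma pscomp_C (c : ℂ) (g : PowerSeries ℂ) : pscomp (C c) g = C c := by
  ext n
  rw [coeff_pscomp, Finset.sum_eq_single 0]
  · simp [coeff_C]
  · intro k _ hk
    simp [coeff_C, hk]
  · simp

lemma pscomp_one (g : PowerSeries ℂ) : pscomp 1 g = 1 := by
  simpa using pscomp_C 1 g

lemma constantCoeff_pscomp (f g : PowerSeries ℂ) :
    constantCoeff (pscomp f g) = constantCoeff f := by
  have h := coeff_pscomp f g 0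
  simpa [coeff_zero_eq_constantCoeff] using h

lemma pscomp_monomial {g : PowerSeries ℂ} (hg : constantCoeff g = 0)
    (c : ℂ) (k : ℕ) :
    pscomp ((Polynomial.monomial k c : Polynomial ℂ) : PowerSeries ℂ) g = C c * g ^ k := by
  ext n
  rw [coeff_pscomp, coeff_C_mul]
  by_cases hk : k ≤ n
  · rw [Finset.sum_eq_single k]
    · simp [Polynomial.coeff_coe]
    · intro j _ hj
      rw [Polynomial.coeff_coe, Polynomial.coeff_monomial, if_neg (Ne.symm hj), zero_mul]
    · intro h
      exact absurd (Finset.mem_range.mpr (by omega)) h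
  · rw [Finset.sum_eq_zero, coeff_pow_eq_zero hg (by omega), mul_zero]
    intro j hj
    rw [Finset.mem_range] at hj
    rw [Polynomial.coeff_coe, Polynomial.coeff_monomial, if_neg (by omega : ¬ k = j), zero_mul]

lemma pscomp_coe {g : PowerSeries ℂ} (hg : constantCoeff g = 0) (p : Polynomial ℂ) :
    pscomp (↑p) g = p.eval₂ C g := by
  induction p using Polynomial.induction_on' with
  | add p q hp hq =>
      rw [Polynomial.coe_add, pscomp_add, hp, hq, Polynomial.eval₂_add]
  | monomial k c =>
      rw [pscomp_monomial hg, Polynomial.eval₂_monomial]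

lemma coeff_pscomp_trunc {g : PowerSeries ℂ} (hg : constantCoeff g = 0)
    (f : PowerSeries ℂ) (n : ℕ) :
    coeff n (pscomp f g) =
      coeff n (pscomp ((trunc (n + 1) f : Polynomial ℂ) : PowerSeries ℂ) g) := by
  apply pscomp_congr
  intro k hk
  rw [Polynomial.coeff_coe, coeff_trunc, if_pos (by omega)]

lemma pscomp_mul {g : PowerSeries ℂ} (hg : constantCoeff g = 0)
    (f₁ f₂ : PowerSeries ℂ) :
    pscomp (f₁ * f₂) g = pscomp f₁ g * pscomp f₂ g := by
  ext n
  set p₁ : Polynomial ℂ := trunc (n + 1) f₁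
  set p₂ : Polynomial ℂ := trunc (n + 1) f₂
  have h1 : coeff n (pscomp (f₁ * f₂) g) = coeff n (pscomp ((↑(p₁ * p₂) : PowerSeries ℂ)) g) := by
    apply pscomp_congr
    intro k hk
    rw [Polynomial.coe_mul]
    rw [coeff_mul, coeff_mul]
    refine Finset.sum_congr rfl fun x hx => ?_
    rw [Finset.HasAntidiagonal.mem_antidiagonal] at hx
    rw [Polynomial.coeff_coe, Polynomial.coeff_coe, coeff_trunc, coeff_trunc,
      if_pos (by omega), if_pos (by omega)]
  have h2 : coeff n (pscomp f₁ g * pscomp f₂ g) =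
      coeff n (pscomp (↑p₁) g * pscomp (↑p₂) g) := by
    rw [coeff_mul, coeff_mul]
    refine Finset.sum_congr rfl fun x hx => ?_
    rw [Finset.HasAntidiagonal.mem_antidiagonal] at hx
    rw [show coeff x.1 (pscomp f₁ g) = coeff x.1 (pscomp (↑p₁) g) from
        pscomp_congr fun k hk => by
          rw [Polynomial.coeff_coe, coeff_trunc, if_pos (by omega)],
      show coeff x.2 (pscomp f₂ g) = coeff x.2 (pscomp (↑p₂) g) from
        pscomp_congr fun k hk => by
          rw [Polynomial.coeff_coe, coeff_trunc, if_pos (by omega)]]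
  rw [h1, h2, pscomp_coe hg, pscomp_coe hg, pscomp_coe hg, Polynomial.eval₂_mul]

lemma pscomp_pow {g : PowerSeries ℂ} (hg : constantCoeff g = 0)
    (f : PowerSeries ℂ) (k : ℕ) :
    pscomp (f ^ k) g = pscomp f g ^ k := by
  induction k with
  | zero => simpa using pscomp_one g
  | succ k ih => rw [pow_succ, pscomp_mul hg, ih, pow_succ]

lemma pscomp_assoc {g h : PowerSeries ℂ} (hg : constantCoeff g = 0)
    (hh : constantCoeff h = 0) (f : PowerSeries ℂ) :
    pscomp (pscomp f g) h = pscomp f (pscomp g h) := by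
  have hgh : constantCoeff (pscomp g h) = 0 := by
    rw [constantCoeff_pscomp, hg]
  have hpoly : ∀ p : Polynomial ℂ,
      pscomp (pscomp (↑p) g) h = pscomp (↑p) (pscomp g h) := by
    intro p
    induction p using Polynomial.induction_on' with
    | add p q hp hq =>
        rw [Polynomial.coe_add, pscomp_add, pscomp_add, hp, hq, pscomp_add]
    | monomial k c =>
        rw [pscomp_monomial hg, pscomp_monomial hgh, pscomp_mul hh,
          pscomp_C, pscomp_pow hh]
  ext n
  set p : Polynomial ℂ := trunc (n + 1) f with hp
  have e1 : coeff n (pscomp (pscomp f g) h) =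
      coeff n (pscomp (pscomp (↑p) g) h) := by
    apply pscomp_congr
    intro k hk
    exact pscomp_congr fun j hj => by
      rw [Polynomial.coeff_coe, coeff_trunc, if_pos (by omega)]
  have e2 : coeff n (pscomp f (pscomp g h)) =
      coeff n (pscomp (↑p) (pscomp g h)) := by
    apply pscomp_congr
    intro k hk
    rw [Polynomial.coeff_coe, coeff_trunc, if_pos (by omega)]
  rw [e1, e2, hpoly p]

lemma pscomp_X {g : PowerSeries ℂ} (hg : constantCoeff g = 0) :
    pscomp X g = g := by
  have h := pscomp_monomial hg 1 1
  rw [X_eq]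
  simpa [Polynomial.coe_monomial] using h

lemma pscomp_X_right (f : PowerSeries ℂ) : pscomp f X = f := by
  ext n
  rw [coeff_pscomp, Finset.sum_eq_single n]
  · simp [coeff_X_pow]
  · intro k _ hk
    simp [coeff_X_pow, Ne.symm hk]
  · intro h
    exact absurd (Finset.mem_range.mpr (by omega)) h

/-- let `M`, `C` be power series with zero constant term such that
`C ∘ (X·(T∘M)) = M`, where `T(X) = (λX+1)(X+1)` and `λ ∈ (0,1]`.  Let `V` be the
compositional inverse `(X·(T∘M))^{<-1>}`, let `W = X / V` (i.e. `W·V = X`), and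
let `U = (T-1)^{<-1>}`.  Then `C = U((X / (X·(T∘M))^{<-1>}) - 1) = U ∘ (W - 1)`. -/
theorem rectangular_R_transform_formula (l : ℝ) (hl : l ∈ Set.Ioc (0 : ℝ) 1)
    (M C V W U : PowerSeries ℂ)
    (hM0 : PowerSeries.constantCoeff M = 0)
    (hC0 : PowerSeries.constantCoeff C = 0)
    -- `S := X·(T∘M)` where `T∘M = (λM+1)(M+1)`
    (hC : pscomp C (PowerSeries.X * (((l : ℂ) • M + 1) * (M + 1))) = M)
    -- `V = S^{<-1>}`
    (hV0 : PowerSeries.constantCoeff V = 0)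
    (hV1 : pscomp (PowerSeries.X * (((l : ℂ) • M + 1) * (M + 1))) V = PowerSeries.X)
    (hV2 : pscomp V (PowerSeries.X * (((l : ℂ) • M + 1) * (M + 1))) = PowerSeries.X)
    -- `W = X / V` in the field of fractions of `ℂ[[X]]`
    (hW : W * V = PowerSeries.X)
    -- `U = (T-1)^{<-1>}`, where `T(X) - 1 = λX² + (λ+1)X`
    (hU0 : PowerSeries.constantCoeff U = 0)
    (hU1 : pscomp U ((l : ℂ) • PowerSeries.X ^ 2 + ((l : ℂ) + 1) • PowerSeries.X) =
      PowerSeries.X)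
    (hU2 : pscomp ((l : ℂ) • PowerSeries.X ^ 2 + ((l : ℂ) + 1) • PowerSeries.X) U =
      PowerSeries.X) :
    C = pscomp U (W - 1) := by
  set G : PowerSeries ℂ := ((l : ℂ) • M + 1) * (M + 1) with hGdef
  set S : PowerSeries ℂ := X * G with hSdef
  have hS0 : constantCoeff S = 0 := by simp [hSdef]
  have hG0 : constantCoeff G = 1 := by simp [hGdef, hM0, smul_eq_C_mul]
  have hS1 : coeff 1 S = 1 := by
    rw [hSdef, coeff_succ_X_mul 0, coeff_zero_eq_constantCoeff, hG0]
  have hV1coeff : coeff 1 V = 1 := by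
    have h := congrArg (coeff 1) hV2
    rw [coeff_pscomp, Finset.sum_range_succ, Finset.sum_range_succ,
      Finset.sum_range_zero, coeff_X] at h
    simp only [pow_zero, pow_one, coeff_one, hS1, mul_one] at h
    simpa using h
  have hW0 : constantCoeff W = 1 := by
    have h := congrArg (coeff 1) hW
    rw [coeff_mul, show (Finset.HasAntidiagonal.antidiagonal 1 : Finset (ℕ × ℕ)) = {(0,1),(1,0)} from rfl,
      Finset.sum_pair (by decide), coeff_X] at h
    simp only [coeff_zero_eq_constantCoeff, hV0, mul_zero, add_zero, if_true] at h
    rwa [hV1coeff, mul_one] at h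
  have hWm10 : constantCoeff (W - 1) = 0 := by simp [hW0]
  have hGS : pscomp W S = G := by
    have hmul : pscomp W S * pscomp V S = pscomp (W * V) S := (pscomp_mul hS0 W V).symm
    rw [hW, pscomp_X hS0, hV2, hSdef] at hmul
    exact mul_right_cancel₀ X_ne_zero (by rw [hmul, mul_comm])
  have hT1c : constantCoeff ((l : ℂ) • (X : PowerSeries ℂ) ^ 2 + ((l : ℂ) + 1) • X) = 0 := by
    simp [smul_eq_C_mul]
  have hT : pscomp ((l : ℂ) • X ^ 2 + ((l : ℂ) + 1) • X) M = G - 1 := by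
    rw [pscomp_add, pscomp_smul, pscomp_smul, pscomp_pow hM0, pscomp_X hM0, hGdef]
    rw [smul_eq_C_mul, smul_eq_C_mul, smul_eq_C_mul]
    simp only [map_add, map_one]
    ring
  have hWS : pscomp (W - 1) S = G - 1 := by
    rw [pscomp_sub, hGS, pscomp_one]
  have key : pscomp (pscomp U (W - 1)) S = M := by
    rw [pscomp_assoc hWm10 hS0, hWS, ← hT, ← pscomp_assoc hT1c hM0, hU1, pscomp_X hM0]
  calc C = pscomp (pscomp C S) V := by
        rw [pscomp_assoc hS0 hV0, hV1, pscomp_X_right]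
    _ = pscomp (pscomp (pscomp U (W - 1)) S) V := by rw [hC, key]
    _ = pscomp U (W - 1) := by
        rw [pscomp_assoc hS0 hV0, hV1, pscomp_X_right]
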